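/- The function f(τ) = τ/(1-√τ) is convex on the open interval (0,1). -/

import Mathlib

open Real Set Filter

private lemma sqrt_facts {x : ℝ} (hx : x ∈ Set.Ioo (0:ℝ) 1) :
    0 < Real.sqrt x ∧ Real.sqrt x < 1 := by
  constructor
  · exact Real.sqrt_pos.mpr hx.1
  · rw [show (1:ℝ) = Real.sqrt 1 by simp]
    exact Real.sqrt_lt_sqrt hx.1.le hx.2

private lemma hasDerivAt_f {x : ℝ} (hx : x ∈ Set.Ioo (0:ℝ) 1) :
    HasDerivAt (fun τ => τ / (1 - Real.sqrt τ))
      ((1 - Real.sqrt x / 2) / (1 - Real.sqrt x)^2) x := by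
  obtain ⟨hs0, hs1⟩ := sqrt_facts hx
  have hxne : x ≠ 0 := hx.1.ne'
  have hden : 1 - Real.sqrt x ≠ 0 := by linarith
  have hsqrt : HasDerivAt Real.sqrt (1 / (2 * Real.sqrt x)) x :=
    Real.hasDerivAt_sqrt hxne
  have hdenom : HasDerivAt (fun τ => 1 - Real.sqrt τ) (-(1 / (2 * Real.sqrt x))) x := by
    simpa using hsqrt.const_sub 1
  have h : HasDerivAt (fun τ => τ / (1 - Real.sqrt τ)) _ x := (hasDerivAt_id x).div hdenom hden
  convert h using 1
  have hsq : Real.sqrt x * Real.sqrt x = x := Real.mul_self_sqrt hx.1.le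
  field_simp
  ring_nf
  nlinarith [hsq, show id x = x from rfl]

private lemma hasDerivAt_g {x : ℝ} (hx : x ∈ Set.Ioo (0:ℝ) 1) :
    HasDerivAt (fun τ => (1 - Real.sqrt τ / 2) / (1 - Real.sqrt τ)^2)
      ((3 - Real.sqrt x) / (4 * Real.sqrt x * (1 - Real.sqrt x)^3)) x := by
  obtain ⟨hs0, hs1⟩ := sqrt_facts hx
  have hxne : x ≠ 0 := hx.1.ne'
  have hden : 1 - Real.sqrt x ≠ 0 := by linarith
  have hsqrt : HasDerivAt Real.sqrt (1 / (2 * Real.sqrt x)) x :=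
    Real.hasDerivAt_sqrt hxne
  have hnum : HasDerivAt (fun τ => 1 - Real.sqrt τ / 2) (-(1 / (2 * Real.sqrt x)) / 2) x := by
    simpa [neg_div] using ((hsqrt.div_const 2).const_sub 1)
  have hd1 : HasDerivAt (fun τ => 1 - Real.sqrt τ) (-(1 / (2 * Real.sqrt x))) x := by
    simpa using hsqrt.const_sub 1
  have hd2 : HasDerivAt (fun τ => (1 - Real.sqrt τ)^2)
      (2 * (1 - Real.sqrt x)^(2-1) * (-(1 / (2 * Real.sqrt x)))) x := hd1.pow 2
  have hden2 : (1 - Real.sqrt x)^2 ≠ 0 := pow_ne_zero 2 hden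
  have h : HasDerivAt (fun τ => (1 - Real.sqrt τ / 2) / (1 - Real.sqrt τ)^2) _ x :=
    hnum.div hd2 hden2
  convert h using 1
  have hsq : Real.sqrt x * Real.sqrt x = x := Real.mul_self_sqrt hx.1.le
  field_simp
  ring

/-- The function `f(τ) = τ / (1 - √τ)` is convex on the open interval `(0, 1)`. -/
theorem convexOn_mm1_queue_length :
    ConvexOn ℝ (Set.Ioo (0:ℝ) 1) (fun τ => τ / (1 - Real.sqrt τ)) := by
  have hopen : IsOpen (Set.Ioo (0:ℝ) 1) := isOpen_Ioo
  apply (strictConvexOn_of_deriv2_pos (convex_Ioo 0 1) ?_ ?_).convexOn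
  · -- continuity
    apply ContinuousOn.div continuousOn_id
    · exact (continuous_const.sub Real.continuous_sqrt).continuousOn
    · intro x hx
      obtain ⟨hs0, hs1⟩ := sqrt_facts hx
      intro h; linarith [h]
  · intro x hx
    rw [interior_Ioo] at hx
    obtain ⟨hs0, hs1⟩ := sqrt_facts hx
    have hEq : deriv (fun τ => τ / (1 - Real.sqrt τ)) =ᶠ[nhds x]
        (fun τ => (1 - Real.sqrt τ / 2) / (1 - Real.sqrt τ)^2) := by
      filter_upwards [hopen.mem_nhds hx] with y hy
      exact (hasDerivAt_f hy).deriv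
    have h2 : deriv (deriv (fun τ => τ / (1 - Real.sqrt τ))) x
        = (3 - Real.sqrt x) / (4 * Real.sqrt x * (1 - Real.sqrt x)^3) := by
      rw [hEq.deriv_eq]
      exact (hasDerivAt_g hx).deriv
    rw [show deriv^[2] (fun τ => τ / (1 - Real.sqrt τ)) x
        = deriv (deriv (fun τ => τ / (1 - Real.sqrt τ))) x from rfl, h2]
    exact div_pos (by linarith) (mul_pos (by positivity) (pow_pos (by linarith) 3))
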